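/- arXiv:math/0602238 — 6 statements merged into one kernel-verified Lean document; each statement's English description precedes it below -/
import Mathlib

section
/- Let g(x) = Σ_{j=1}^K π_j φ(x; μ_j, Σ_j) be a mixture of K multivariate normal densities on ℝ^D with positive definite covariance matrices Σ_j, mixing proportions π_j ∈ (0,1) summing to 1. If x* is a critical point of g (i.e., ∇g(x*) = 0), then there exist α_1,...,α_K ≥ 0 with Σα_i = 1 such that x* = [Σ_i α_i Σ_i^{-1}]^{-1} [Σ_i α_i Σ_i^{-1} μ_i]. In other words, all critical points of g lie on the ridgeline manifold. -/
open Matrix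

/-- Multivariate normal density on `ℝ^D` with mean `μ` and covariance `S`. -/
noncomputable def gauss (D : ℕ) (μ : Fin D → ℝ) (S : Matrix (Fin D) (Fin D) ℝ)
    (x : Fin D → ℝ) : ℝ :=
  (Real.sqrt ((2 * Real.pi) ^ D * S.det))⁻¹ *
    Real.exp (-((x - μ) ⬝ᵥ (S⁻¹ *ᵥ (x - μ))) / 2)

open ContinuousLinearMap in
lemma hasFDerivAt_gauss (D : ℕ) (μ : Fin D → ℝ) (S : Matrix (Fin D) (Fin D) ℝ)
    (x : Fin D → ℝ) :
    HasFDerivAt (gauss D μ S)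
      ((gauss D μ S x * -2⁻¹) •
        ∑ j, ((x j - μ j) • ∑ k, S⁻¹ j k • (proj k : (Fin D → ℝ) →L[ℝ] ℝ)
          + (∑ k, S⁻¹ j k * (x k - μ k)) • (proj j : (Fin D → ℝ) →L[ℝ] ℝ))) x := by
  have h1 : ∀ j, HasFDerivAt (fun y : Fin D → ℝ => y j - μ j)
      (proj j : (Fin D → ℝ) →L[ℝ] ℝ) x :=
    fun j => ((proj j : (Fin D → ℝ) →L[ℝ] ℝ).hasFDerivAt).sub_const (μ j)
  have h2 : ∀ j, HasFDerivAt (fun y : Fin D → ℝ => ∑ k, S⁻¹ j k * (y k - μ k))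
      (∑ k, S⁻¹ j k • (proj k : (Fin D → ℝ) →L[ℝ] ℝ)) x :=
    fun j => HasFDerivAt.fun_sum fun k _ => (h1 k).const_mul (S⁻¹ j k)
  have hq : HasFDerivAt (fun y : Fin D → ℝ => (y - μ) ⬝ᵥ (S⁻¹ *ᵥ (y - μ)))
      (∑ j, ((x j - μ j) • ∑ k, S⁻¹ j k • (proj k : (Fin D → ℝ) →L[ℝ] ℝ)
        + (∑ k, S⁻¹ j k * (x k - μ k)) • (proj j : (Fin D → ℝ) →L[ℝ] ℝ))) x := by
    have h := HasFDerivAt.fun_sum (fun j (_ : j ∈ Finset.univ) => (h1 j).mul (h2 j))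
    have heq : (fun y : Fin D → ℝ => (y - μ) ⬝ᵥ (S⁻¹ *ᵥ (y - μ)))
        = fun y : Fin D → ℝ => ∑ j, (y j - μ j) * ∑ k, S⁻¹ j k * (y k - μ k) := by
      funext y
      simp [dotProduct, mulVec]
    rw [heq]
    exact h
  have heq2 : gauss D μ S
      = fun y : Fin D → ℝ =>
        (Real.sqrt ((2 * Real.pi) ^ D * S.det))⁻¹ *
          Real.exp (2⁻¹ * -((y - μ) ⬝ᵥ (S⁻¹ *ᵥ (y - μ)))) := by
    funext y
    unfold gauss
    rw [div_eq_inv_mul]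
  have h3 := ((hq.neg.const_mul (2⁻¹ : ℝ)).exp).const_mul
    (Real.sqrt ((2 * Real.pi) ^ D * S.det))⁻¹
  rw [heq2]
  refine h3.congr_fderiv ?_
  ext v
  simp only [ContinuousLinearMap.smul_apply, ContinuousLinearMap.neg_apply, smul_eq_mul, Pi.neg_apply]
  ring

open ContinuousLinearMap

/-- All critical points of a normal mixture lie on the ridgeline manifold. -/
theorem ridgeline_contains_critical_points
    (D K : ℕ) (w : Fin K → ℝ) (hw : ∀ i, w i ∈ Set.Ioo (0 : ℝ) 1)
    (hwsum : ∑ i, w i = 1)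
    (μ : Fin K → (Fin D → ℝ)) (S : Fin K → Matrix (Fin D) (Fin D) ℝ)
    (hS : ∀ i, (S i).PosDef)
    (xstar : Fin D → ℝ)
    (hcrit : fderiv ℝ (fun x => ∑ i, w i * gauss D (μ i) (S i) x) xstar = 0) :
    ∃ α : Fin K → ℝ, (∀ i, 0 ≤ α i) ∧ (∑ i, α i = 1) ∧
      xstar = (∑ i, α i • (S i)⁻¹)⁻¹ *ᵥ (∑ i, α i • ((S i)⁻¹ *ᵥ μ i)) := by
  
  classical
  have hK : K ≠ 0 := by rintro rfl; simp at hwsum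
  haveI : Nonempty (Fin K) := Fin.pos_iff_nonempty.mp (Nat.pos_of_ne_zero hK)
  set g : Fin K → ℝ := fun i => gauss D (μ i) (S i) xstar with hgdef
  have hg : ∀ i, 0 < g i := by
    intro i
    apply mul_pos
    · exact inv_pos.mpr (Real.sqrt_pos.mpr (mul_pos (pow_pos (by positivity) D) (hS i).det_pos))
    · exact Real.exp_pos _
  have hAsymm : ∀ i (j k : Fin D), (S i)⁻¹ j k = (S i)⁻¹ k j := by
    intro i j k
    have h := ((hS i).inv).isHermitian
    have := congrFun (congrFun h j) k
    simpa [Matrix.conjTranspose_apply] using this.symm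
  have hsum : HasFDerivAt (fun x => ∑ i, w i * gauss D (μ i) (S i) x)
      (∑ i, w i • ((g i * -2⁻¹) •
        ∑ j, ((xstar j - μ i j) • ∑ k, (S i)⁻¹ j k • (proj k : (Fin D → ℝ) →L[ℝ] ℝ)
          + (∑ k, (S i)⁻¹ j k * (xstar k - μ i k)) • (proj j : (Fin D → ℝ) →L[ℝ] ℝ))))
      xstar :=
    HasFDerivAt.fun_sum fun i _ => (hasFDerivAt_gauss D (μ i) (S i) xstar).const_mul (w i)
  have hL0 := hsum.fderiv.symm.trans hcrit
  have hcoord : ∀ m, ∑ i, (w i * g i) * (((S i)⁻¹ *ᵥ (xstar - μ i)) m) = 0 := by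
    intro m
    have h := congrFun (congrArg DFunLike.coe hL0) (Pi.single m 1)
    simp only [ContinuousLinearMap.sum_apply, ContinuousLinearMap.smul_apply,
      ContinuousLinearMap.add_apply, ContinuousLinearMap.proj_apply, smul_eq_mul,
      ContinuousLinearMap.zero_apply, Pi.single_apply, mul_ite, mul_one, mul_zero,
      ite_mul, zero_mul, Finset.sum_add_distrib, Finset.sum_ite_eq', Finset.mem_univ,
      if_true] at h
    have key1 : ∀ i, ∑ j, (xstar j - μ i j) * (S i)⁻¹ j m
        = ((S i)⁻¹ *ᵥ (xstar - μ i)) m := by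
      intro i
      simp only [Matrix.mulVec, dotProduct, Pi.sub_apply]
      exact Finset.sum_congr rfl fun j _ => by rw [hAsymm i j m]; ring
    have key2 : ∀ i, ∑ k, (S i)⁻¹ m k * (xstar k - μ i k)
        = ((S i)⁻¹ *ᵥ (xstar - μ i)) m := by
      intro i
      simp [Matrix.mulVec, dotProduct]
    simp only [key1, key2] at h
    calc ∑ i, w i * g i * ((S i)⁻¹ *ᵥ (xstar - μ i)) m
        = -∑ i, w i * (g i * -2⁻¹ *
            (((S i)⁻¹ *ᵥ (xstar - μ i)) m + ((S i)⁻¹ *ᵥ (xstar - μ i)) m)) := by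
          rw [← Finset.sum_neg_distrib]
          exact Finset.sum_congr rfl fun i _ => by ring
      _ = 0 := by rw [h, neg_zero]
  have hvec : ∑ i, (w i * g i) • ((S i)⁻¹ *ᵥ (xstar - μ i)) = (0 : Fin D → ℝ) := by
    funext m
    simpa [Finset.sum_apply] using hcoord m
  set c : ℝ := ∑ i, w i * g i with hcdef
  have hc : 0 < c := Finset.sum_pos (fun i _ => mul_pos (hw i).1 (hg i)) Finset.univ_nonempty
  refine ⟨fun i => (w i * g i) / c, fun i => div_nonneg (mul_pos (hw i).1 (hg i)).le hc.le,
    by rw [← Finset.sum_div, div_self hc.ne'], ?_⟩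
  have expand : ∀ v : Fin D → ℝ,
      (∑ i, ((w i * g i) / c) • (S i)⁻¹) *ᵥ v = ∑ i, ((w i * g i) / c) • ((S i)⁻¹ *ᵥ v) := by
    intro v
    funext m
    simp only [Matrix.mulVec, dotProduct, Finset.sum_apply, Matrix.sum_apply, Pi.smul_apply,
      Matrix.smul_apply, smul_eq_mul, Finset.sum_mul, Finset.mul_sum, mul_assoc]
    rw [Finset.sum_comm]
  have hs : ∑ i, (w i * g i) • ((S i)⁻¹ *ᵥ xstar) = ∑ i, (w i * g i) • ((S i)⁻¹ *ᵥ μ i) := by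
    have h' := hvec
    simp only [Matrix.mulVec_sub, smul_sub] at h'
    rw [Finset.sum_sub_distrib] at h'
    exact sub_eq_zero.mp h'
  have scale : ∀ z : Fin K → Fin D → ℝ,
      ∑ i, ((w i * g i) / c) • z i = c⁻¹ • ∑ i, (w i * g i) • z i := by
    intro z
    rw [Finset.smul_sum]
    exact Finset.sum_congr rfl fun i _ => by rw [smul_smul, div_eq_inv_mul]
  have hMx : (∑ i, ((w i * g i) / c) • (S i)⁻¹) *ᵥ xstar
      = ∑ i, ((w i * g i) / c) • ((S i)⁻¹ *ᵥ μ i) := by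
    rw [expand, scale (fun i => (S i)⁻¹ *ᵥ xstar), hs,
      ← scale (fun i => (S i)⁻¹ *ᵥ μ i)]
  have hMpd : (∑ i, ((w i * g i) / c) • (S i)⁻¹).PosDef := by
    rw [Matrix.posDef_iff_dotProduct_mulVec]
    constructor
    · show _ = _
      rw [Matrix.conjTranspose_sum]
      exact Finset.sum_congr rfl fun i _ => by
        rw [Matrix.conjTranspose_smul, ((hS i).inv).isHermitian, star_trivial]
    · intro x hx
      rw [expand x]
      have hdp : star x ⬝ᵥ (∑ i, ((w i * g i) / c) • ((S i)⁻¹ *ᵥ x))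
          = ∑ i, ((w i * g i) / c) * (star x ⬝ᵥ ((S i)⁻¹ *ᵥ x)) := by
        simp only [dotProduct, Finset.sum_apply, Pi.smul_apply, smul_eq_mul, Finset.mul_sum]
        rw [Finset.sum_comm]
        exact Finset.sum_congr rfl fun i _ => Finset.sum_congr rfl fun m _ => by ring
      rw [hdp]
      exact Finset.sum_pos (fun i _ => mul_pos (div_pos (mul_pos (hw i).1 (hg i)) hc)
        ((hS i).inv.dotProduct_mulVec_pos hx)) Finset.univ_nonempty
  have hdet : IsUnit (∑ i, ((w i * g i) / c) • (S i)⁻¹).det := hMpd.det_pos.ne'.isUnit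
  rw [← hMx, Matrix.mulVec_mulVec, Matrix.nonsing_inv_mul _ hdet, Matrix.one_mulVec]
end

section
/- Let x(α) be the ridgeline for a K-component normal mixture, S_α = Σ_j α_j Σ_j^{-1}, v_j = Σ_j^{-1}(x(α) - μ_j), and d_j = S_α^{-1}(v_j - v_K) for j = 1,...,K-1 the tangent directions. If w satisfies w' S_α d_j = 0 for all j = 1,...,K-1, then w' v_j = 0 for all j = 1,...,K. -/
open Matrix


private lemma mySum_mulVec {n k : ℕ} (M : Fin k → Matrix (Fin n) (Fin n) ℝ)
    (x : Fin n → ℝ) : (∑ i, M i) *ᵥ x = ∑ i, (M i) *ᵥ x := by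
  ext r
  simp only [Matrix.mulVec, dotProduct, Matrix.sum_apply, Finset.sum_apply, Finset.sum_mul]
  exact Finset.sum_comm

private lemma myDot_sum {n k : ℕ} (w : Fin n → ℝ) (f : Fin k → (Fin n → ℝ)) :
    w ⬝ᵥ (∑ i, f i) = ∑ i, w ⬝ᵥ f i := by
  simp only [dotProduct, Finset.sum_apply, Finset.mul_sum]
  exact Finset.sum_comm

/-- If `w` is orthogonal (via `S_α`) to all the tangent directions `d_j` of the
ridgeline surface, then `w` is orthogonal to every vector `v_j`. -/
theorem orthogonal_to_tangents_implies_orthogonal_to_vs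
    (D K : ℕ)
    (μ : Fin (K + 1) → (Fin D → ℝ)) (Sg : Fin (K + 1) → Matrix (Fin D) (Fin D) ℝ)
    (hSg : ∀ j, (Sg j).PosDef)
    (α : Fin (K + 1) → ℝ) (hα : ∀ j, 0 < α j) (hαsum : ∑ j, α j = 1)
    (Sα : Matrix (Fin D) (Fin D) ℝ) (hSα : Sα = ∑ j, α j • (Sg j)⁻¹)
    (x : Fin D → ℝ) (hx : x = Sα⁻¹ *ᵥ (∑ j, α j • ((Sg j)⁻¹ *ᵥ μ j)))
    (v : Fin (K + 1) → (Fin D → ℝ)) (hv : ∀ j, v j = (Sg j)⁻¹ *ᵥ (x - μ j))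
    (d : Fin K → (Fin D → ℝ))
    (hd : ∀ j : Fin K, d j = Sα⁻¹ *ᵥ (v j.castSucc - v (Fin.last K)))
    (w : Fin D → ℝ) (hw : ∀ j : Fin K, w ⬝ᵥ (Sα *ᵥ d j) = 0) :
    ∀ j : Fin (K + 1), w ⬝ᵥ v j = 0 := by
  -- Sα is positive definite
  have hSαpd : Sα.PosDef := by
    rw [posDef_iff_dotProduct_mulVec]
    constructor
    · rw [hSα]
      exact by
        unfold Matrix.IsHermitian
        rw [Matrix.conjTranspose_sum]
        refine Finset.sum_congr rfl fun j _ => ?_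
        rw [Matrix.conjTranspose_smul, (hSg j).inv.1, star_trivial]
    · intro y hy
      rw [hSα]
      rw [mySum_mulVec]
      simp only [smul_mulVec]
      rw [myDot_sum]
      simp only [dotProduct_smul]
      have hpos : ∀ j ∈ Finset.univ, (0:ℝ) < α j * (star y ⬝ᵥ (Sg j)⁻¹ *ᵥ y) := by
        intro j _
        exact mul_pos (hα j) ((hSg j).inv.dotProduct_mulVec_pos hy)
      calc (0:ℝ) < ∑ j, α j * (star y ⬝ᵥ (Sg j)⁻¹ *ᵥ y) :=
            Finset.sum_pos hpos ⟨0, Finset.mem_univ 0⟩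
        _ = ∑ j, α j • (star y ⬝ᵥ (Sg j)⁻¹ *ᵥ y) := by simp [smul_eq_mul]
  have hinv : Sα * Sα⁻¹ = 1 := mul_nonsing_inv Sα ((Matrix.isUnit_iff_isUnit_det _).1 hSαpd.isUnit)
  -- cancel Sα with Sα⁻¹ in hw
  have heq : ∀ j : Fin K, w ⬝ᵥ v j.castSucc = w ⬝ᵥ v (Fin.last K) := by
    intro j
    have := hw j
    rw [hd j, mulVec_mulVec, hinv, one_mulVec, dotProduct_sub] at this
    linarith
  have heq' : ∀ j : Fin (K + 1), w ⬝ᵥ v j = w ⬝ᵥ v (Fin.last K) := by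
    intro j
    induction j using Fin.lastCases with
    | last => rfl
    | cast i => exact heq i
  -- ∑ j, α j • v j = 0
  have hsum : ∑ j, α j • v j = 0 := by
    have h1 : ∑ j, α j • v j = Sα *ᵥ x - ∑ j, α j • ((Sg j)⁻¹ *ᵥ μ j) := by
      rw [hSα, mySum_mulVec, ← Finset.sum_sub_distrib]
      congr 1
      ext j
      rw [hv j, mulVec_sub, smul_mulVec, smul_sub]
    have h2 : Sα *ᵥ x = ∑ j, α j • ((Sg j)⁻¹ *ᵥ μ j) := by
      rw [hx, mulVec_mulVec, hinv, one_mulVec]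
    rw [h1, h2, sub_self]
  -- dot with w
  have hzero : (∑ j, α j) * (w ⬝ᵥ v (Fin.last K)) = 0 := by
    have : w ⬝ᵥ (∑ j, α j • v j) = 0 := by rw [hsum, dotProduct_zero]
    rw [Finset.sum_mul]
    rw [myDot_sum] at this
    calc ∑ j, α j * (w ⬝ᵥ v (Fin.last K)) = ∑ j, w ⬝ᵥ (α j • v j) := by
          refine Finset.sum_congr rfl fun j _ => ?_
          rw [dotProduct_smul, smul_eq_mul, heq' j]
      _ = 0 := this
  have hlast : w ⬝ᵥ v (Fin.last K) = 0 := by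
    rw [hαsum, one_mul] at hzero
    exact hzero
  intro j
  rw [heq' j, hlast]
end

section
/- Under the hypotheses of the ridgeline construction with K components, if w ∈ W = {w : w'S_α d_j = 0 ∀j}, then the mixture density g(x) restricted to the line {x(α) + δw : δ ∈ ℝ} attains its maximum at δ = 0. -/
open Matrix

lemma my_dotProduct_sum {ι m : Type*} [Fintype m] (s : Finset ι)
    (w : m → ℝ) (f : ι → (m → ℝ)) :
    w ⬝ᵥ (∑ i ∈ s, f i) = ∑ i ∈ s, w ⬝ᵥ f i := by
  simp only [dotProduct, Finset.sum_apply, Finset.mul_sum]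
  rw [Finset.sum_comm]

lemma my_sum_mulVec {ι n m : Type*} [Fintype m] (s : Finset ι)
    (f : ι → Matrix n m ℝ) (x : m → ℝ) :
    (∑ i ∈ s, f i) *ᵥ x = ∑ i ∈ s, f i *ᵥ x := by
  ext j
  simp only [mulVec, dotProduct, Finset.sum_apply, Matrix.sum_apply, Finset.sum_mul]
  rw [Finset.sum_comm]

/-- Theorem 2: if `w ∈ W`, then along the line `x(α) + δ w` the mixture density
attains its maximum at `δ = 0`. -/
theorem mixture_max_on_ridgeline_orthogonal_line
    (D K : ℕ)
    (π' : Fin (K + 1) → ℝ) (hπ : ∀ j, 0 < π' j) (hπsum : ∑ j, π' j = 1)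
    (μ : Fin (K + 1) → (Fin D → ℝ)) (Sg : Fin (K + 1) → Matrix (Fin D) (Fin D) ℝ)
    (hSg : ∀ j, (Sg j).PosDef)
    (α : Fin (K + 1) → ℝ) (hα : ∀ j, 0 < α j) (hαsum : ∑ j, α j = 1)
    (Sα : Matrix (Fin D) (Fin D) ℝ) (hSα : Sα = ∑ j, α j • (Sg j)⁻¹)
    (x : Fin D → ℝ) (hx : x = Sα⁻¹ *ᵥ (∑ j, α j • ((Sg j)⁻¹ *ᵥ μ j)))
    (v : Fin (K + 1) → (Fin D → ℝ)) (hv : ∀ j, v j = (Sg j)⁻¹ *ᵥ (x - μ j))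
    (d : Fin K → (Fin D → ℝ))
    (hd : ∀ j : Fin K, d j = Sα⁻¹ *ᵥ (v j.castSucc - v (Fin.last K)))
    (w : Fin D → ℝ) (hw : ∀ j : Fin K, w ⬝ᵥ (Sα *ᵥ d j) = 0) :
    ∀ δ : ℝ,
      (∑ j, π' j * gauss D (μ j) (Sg j) (x + δ • w)) ≤
        ∑ j, π' j * gauss D (μ j) (Sg j) x := by
  intro δ
  have hApd : ∀ j, ((Sg j)⁻¹).PosDef := fun j => (hSg j).inv
  have hSαpd : Sα.PosDef := by
    refine posDef_iff_dotProduct_mulVec.mpr ⟨?_, ?_⟩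
    · rw [hSα, IsHermitian, conjTranspose_sum]
      refine Finset.sum_congr rfl fun j _ => ?_
      rw [conjTranspose_smul, star_trivial, (hApd j).isHermitian.eq]
    · intro y hy
      rw [hSα, my_sum_mulVec, my_dotProduct_sum]
      refine Finset.sum_pos (fun j _ => ?_) Finset.univ_nonempty
      rw [smul_mulVec, dotProduct_smul, smul_eq_mul]
      exact mul_pos (hα j) (by simpa using (hApd j).dotProduct_mulVec_pos hy)
  have hSαu : IsUnit Sα.det := hSαpd.det_pos.ne'.isUnit
  have hcancel : ∀ z : Fin D → ℝ, Sα *ᵥ (Sα⁻¹ *ᵥ z) = z := by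
    intro z
    rw [mulVec_mulVec, mul_nonsing_inv _ hSαu, one_mulVec]
  have hsum0 : ∑ j, α j • v j = 0 := by
    have h1 : ∑ j, α j • v j = Sα *ᵥ x - ∑ j, α j • ((Sg j)⁻¹ *ᵥ μ j) := by
      rw [hSα, my_sum_mulVec, ← Finset.sum_sub_distrib]
      refine Finset.sum_congr rfl fun j _ => ?_
      rw [hv j, mulVec_sub, smul_sub, smul_mulVec]
    rw [h1, hx, hcancel, sub_self]
  have hwv : ∀ j, w ⬝ᵥ v j = 0 := by
    have hc : ∀ j, w ⬝ᵥ v j = w ⬝ᵥ v (Fin.last K) := by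
      intro j
      refine Fin.lastCases rfl (fun i => ?_) j
      have h := hw i
      rw [hd i, hcancel, dotProduct_sub] at h
      linarith
    have hc0 : w ⬝ᵥ v (Fin.last K) = 0 := by
      have h0 : w ⬝ᵥ (∑ j, α j • v j) = 0 := by rw [hsum0, dotProduct_zero]
      rw [my_dotProduct_sum] at h0
      simp only [dotProduct_smul, smul_eq_mul, hc] at h0
      rwa [← Finset.sum_mul, hαsum, one_mul] at h0
    intro j
    rw [hc j, hc0]
  refine Finset.sum_le_sum fun j _ => ?_
  refine mul_le_mul_of_nonneg_left ?_ (hπ j).le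
  unfold gauss
  refine mul_le_mul_of_nonneg_left ?_ (inv_nonneg.mpr (Real.sqrt_nonneg _))
  apply Real.exp_le_exp.mpr
  set A := (Sg j)⁻¹ with hAdef
  set u := x - μ j with hu
  have hrw : x + δ • w - μ j = u + δ • w := by rw [hu]; abel
  rw [hrw]
  have hwAu : w ⬝ᵥ (A *ᵥ u) = 0 := by rw [← hv j]; exact hwv j
  have huAw : u ⬝ᵥ (A *ᵥ w) = 0 := by
    rw [dotProduct_mulVec, ← mulVec_transpose,
      ← conjTranspose_eq_transpose_of_trivial, (hApd j).isHermitian.eq,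
      dotProduct_comm]
    exact hwAu
  have hpos : 0 ≤ w ⬝ᵥ (A *ᵥ w) := by simpa using (hApd j).posSemidef.dotProduct_mulVec_nonneg w
  have hq : (u + δ • w) ⬝ᵥ (A *ᵥ (u + δ • w)) =
      u ⬝ᵥ (A *ᵥ u) + δ ^ 2 * (w ⬝ᵥ (A *ᵥ w)) := by
    simp only [mulVec_add, mulVec_smul, dotProduct_add, add_dotProduct,
      dotProduct_smul, smul_dotProduct, smul_eq_mul, hwAu, huAw]
    ring
  rw [hq]
  nlinarith [sq_nonneg δ]
end

section
/- Let φ_1(α), φ_2(α) denote the two normal component densities evaluated along the ridgeline x*(α), and define Π(α) = φ_2'(α)/(φ_2'(α) - φ_1'(α)) (derivative in α). Then 1/Π(α) = 1 + (α φ_1(α))/((1-α) φ_2(α)) for α ∈ (0,1). -/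
open Matrix

noncomputable def ridge (D : ℕ) (μ₁ μ₂ : Fin D → ℝ)
    (S₁ S₂ : Matrix (Fin D) (Fin D) ℝ) (α : ℝ) : Fin D → ℝ :=
  ((1 - α) • S₁⁻¹ + α • S₂⁻¹)⁻¹ *ᵥ ((1 - α) • (S₁⁻¹ *ᵥ μ₁) + α • (S₂⁻¹ *ᵥ μ₂))

/-- Component density \`j\` evaluated along the ridgeline, as a function of \`α\`. -/
noncomputable def φα (D : ℕ) (μ₁ μ₂ : Fin D → ℝ)
    (S₁ S₂ : Matrix (Fin D) (Fin D) ℝ) (ν : Fin D → ℝ) (T : Matrix (Fin D) (Fin D) ℝ)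
    (α : ℝ) : ℝ :=
  gauss D ν T (ridge D μ₁ μ₂ S₁ S₂ α)

lemma det_diffAt {D : ℕ} {M : ℝ → Matrix (Fin D) (Fin D) ℝ} {t : ℝ}
    (h : ∀ i j, DifferentiableAt ℝ (fun t => M t i j) t) :
    DifferentiableAt ℝ (fun t => (M t).det) t := by
  simp only [Matrix.det_apply']
  exact DifferentiableAt.fun_sum fun σ _ =>
    ((DifferentiableAt.fun_finsetProd fun i _ => h (σ i) i)).const_mul _

lemma adj_diffAt {D : ℕ} {M : ℝ → Matrix (Fin D) (Fin D) ℝ} {t : ℝ}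
    (h : ∀ i j, DifferentiableAt ℝ (fun t => M t i j) t) (i j : Fin D) :
    DifferentiableAt ℝ (fun t => (M t).adjugate i j) t := by
  simp only [Matrix.adjugate_apply]
  apply det_diffAt
  intro p q
  by_cases hp : p = j
  · simp only [hp, Matrix.updateRow_self]
    exact differentiableAt_const _
  · simp only [Matrix.updateRow_ne hp]
    exact h p q

lemma inv_mulVec_diffAt {D : ℕ} {M : ℝ → Matrix (Fin D) (Fin D) ℝ} {b : ℝ → Fin D → ℝ} {t : ℝ}
    (h : ∀ i j, DifferentiableAt ℝ (fun t => M t i j) t)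
    (hb : ∀ i, DifferentiableAt ℝ (fun t => b t i) t)
    (hdet : (M t).det ≠ 0) (i : Fin D) :
    DifferentiableAt ℝ (fun t => ((M t)⁻¹ *ᵥ b t) i) t := by
  have : ∀ s, ((M s)⁻¹ *ᵥ b s) i = ((M s).det)⁻¹ * ∑ j, (M s).adjugate i j * b s j := by
    intro s
    rw [Matrix.inv_def, Ring.inverse_eq_inv, Matrix.smul_mulVec]
    simp [Matrix.mulVec, dotProduct]
  simp only [this]
  exact ((det_diffAt h).inv hdet).mul
    (DifferentiableAt.fun_sum fun j _ => (adj_diffAt h i j).mul (hb j))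

lemma smul_posDef {D : ℕ} {A : Matrix (Fin D) (Fin D) ℝ} (hA : A.PosDef) {c : ℝ} (hc : 0 < c) :
    (c • A).PosDef := by
  refine Matrix.PosDef.of_dotProduct_mulVec_pos ?_ fun x hx => ?_
  · unfold Matrix.IsHermitian
    rw [conjTranspose_smul, hA.1.eq]
    simp
  · rw [smul_mulVec, dotProduct_smul]
    exact mul_pos hc (hA.dotProduct_mulVec_pos hx)


lemma gauss_hasDerivAt {D : ℕ} (ν : Fin D → ℝ) {T : Matrix (Fin D) (Fin D) ℝ}
    (hT : T.PosDef) {x : ℝ → Fin D → ℝ} {dx : Fin D → ℝ} {α : ℝ}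
    (hx : HasDerivAt x dx α) :
    HasDerivAt (fun t => gauss D ν T (x t))
      (-(dx ⬝ᵥ (T⁻¹ *ᵥ (x α - ν))) * gauss D ν T (x α)) α := by
  have hxi : ∀ i, HasDerivAt (fun t => x t i) (dx i) α := hasDerivAt_pi.1 hx
  have hsymm : (T⁻¹)ᵀ = T⁻¹ := by
    have := hT.inv.isHermitian
    simpa [Matrix.IsHermitian, Matrix.conjTranspose_eq_transpose_of_trivial] using this
  set q : ℝ → ℝ := fun t => (x t - ν) ⬝ᵥ (T⁻¹ *ᵥ (x t - ν)) with hqdef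
  have hq : HasDerivAt q (2 * (dx ⬝ᵥ (T⁻¹ *ᵥ (x α - ν)))) α := by
    have expand : ∀ t, q t = ∑ i, (x t i - ν i) * (∑ j, T⁻¹ i j * (x t j - ν j)) := by
      intro t; simp [hqdef, dotProduct, Matrix.mulVec]
    have key : HasDerivAt (fun t => ∑ i, (x t i - ν i) * (∑ j, T⁻¹ i j * (x t j - ν j)))
        (∑ i, (dx i * (∑ j, T⁻¹ i j * (x α j - ν j)) +
          (x α i - ν i) * (∑ j, T⁻¹ i j * dx j))) α := by
      apply HasDerivAt.fun_sum
      intro i _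
      exact ((hxi i).sub_const (ν i)).mul
        (HasDerivAt.fun_sum fun j _ => ((hxi j).sub_const (ν j)).const_mul (T⁻¹ i j))
    have : (∑ i, (dx i * (∑ j, T⁻¹ i j * (x α j - ν j)) +
          (x α i - ν i) * (∑ j, T⁻¹ i j * dx j))) = 2 * (dx ⬝ᵥ (T⁻¹ *ᵥ (x α - ν))) := by
      rw [Finset.sum_add_distrib]
      have h1 : (∑ i, dx i * (∑ j, T⁻¹ i j * (x α j - ν j))) = dx ⬝ᵥ (T⁻¹ *ᵥ (x α - ν)) := by
        simp [dotProduct, Matrix.mulVec]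
      have h2 : (∑ i, (x α i - ν i) * (∑ j, T⁻¹ i j * dx j))
          = (x α - ν) ⬝ᵥ (T⁻¹ *ᵥ dx) := by
        simp [dotProduct, Matrix.mulVec]
      have h3 : (x α - ν) ⬝ᵥ (T⁻¹ *ᵥ dx) = dx ⬝ᵥ (T⁻¹ *ᵥ (x α - ν)) := by
        rw [Matrix.dotProduct_mulVec, ← Matrix.mulVec_transpose, hsymm, dotProduct_comm]
      rw [h1, h2, h3]; ring
    rw [hqdef]
    simp only [expand] at *
    exact this ▸ key
  have := (((hq.neg.div_const 2).exp).const_mul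
    ((Real.sqrt ((2 * Real.pi) ^ D * T.det))⁻¹ : ℝ))
  refine this.congr_deriv ?_
  simp only [gauss, hqdef, Pi.neg_apply]
  ring

/-- `1/Π(α) = 1 + α φ₁(α) / ((1-α) φ₂(α))` for `α ∈ (0,1)`. -/
theorem pi_function_formula
    (D : ℕ) (μ₁ μ₂ : Fin D → ℝ) (S₁ S₂ : Matrix (Fin D) (Fin D) ℝ)
    (hS₁ : S₁.PosDef) (hS₂ : S₂.PosDef) (hμ : μ₁ ≠ μ₂)
    (α : ℝ) (hα : α ∈ Set.Ioo (0 : ℝ) 1) :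
    (deriv (φα D μ₁ μ₂ S₁ S₂ μ₂ S₂) α /
        (deriv (φα D μ₁ μ₂ S₁ S₂ μ₂ S₂) α - deriv (φα D μ₁ μ₂ S₁ S₂ μ₁ S₁) α))⁻¹ =
      1 + α * φα D μ₁ μ₂ S₁ S₂ μ₁ S₁ α / ((1 - α) * φα D μ₁ μ₂ S₁ S₂ μ₂ S₂ α) := by
  obtain ⟨hα0, hα1⟩ := hα
  have hα1' : (0:ℝ) < 1 - α := by linarith
  set A := S₁⁻¹ with hAdef
  set B := S₂⁻¹ with hBdef
  have hA : A.PosDef := hS₁.inv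
  have hB : B.PosDef := hS₂.inv
  set K : ℝ → Matrix (Fin D) (Fin D) ℝ := fun t => (1 - t) • A + t • B with hKdef
  set b : ℝ → Fin D → ℝ := fun t => (1 - t) • (A *ᵥ μ₁) + t • (B *ᵥ μ₂) with hbdef
  set x : ℝ → Fin D → ℝ := fun t => (K t)⁻¹ *ᵥ b t with hxdef
  -- positivity of K on Ioo
  have hK : ∀ t ∈ Set.Ioo (0:ℝ) 1, (K t).PosDef := by
    intro t ht
    exact (smul_posDef hA (by linarith [ht.2])).add (smul_posDef hB ht.1)
  have hKdet : ∀ t ∈ Set.Ioo (0:ℝ) 1, (K t).det ≠ 0 := fun t ht => (hK t ht).det_pos.ne'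
  have hKx : ∀ t ∈ Set.Ioo (0:ℝ) 1, K t *ᵥ x t = b t := by
    intro t ht
    show K t *ᵥ ((K t)⁻¹ *ᵥ b t) = b t
    rw [Matrix.mulVec_mulVec, Matrix.mul_nonsing_inv _ (isUnit_iff_ne_zero.2 (hKdet t ht)),
      Matrix.one_mulVec]
  -- entrywise derivatives of K and b
  have hKent : ∀ (i j : Fin D) (t : ℝ), HasDerivAt (fun s => K s i j) (B i j - A i j) t := by
    intro i j t
    have heq : (fun s => K s i j) = fun s => (1 - s) * A i j + s * B i j := by
      funext s; simp [hKdef, Matrix.add_apply, smul_eq_mul]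
    rw [heq]
    have h1 : HasDerivAt (fun s : ℝ => 1 - s) (-1) t := (hasDerivAt_id t).const_sub 1
    have := (h1.mul_const (A i j)).add ((hasDerivAt_id t).mul_const (B i j))
    refine this.congr_deriv ?_
    ring
  have hbent : ∀ (i : Fin D) (t : ℝ),
      HasDerivAt (fun s => b s i) ((B *ᵥ μ₂) i - (A *ᵥ μ₁) i) t := by
    intro i t
    have heq : (fun s => b s i) = fun s => (1 - s) * (A *ᵥ μ₁) i + s * (B *ᵥ μ₂) i := by
      funext s; simp [hbdef, smul_eq_mul]
    rw [heq]
    have h1 : HasDerivAt (fun s : ℝ => 1 - s) (-1) t := (hasDerivAt_id t).const_sub 1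
    have := (h1.mul_const ((A *ᵥ μ₁) i)).add ((hasDerivAt_id t).mul_const ((B *ᵥ μ₂) i))
    refine this.congr_deriv ?_
    ring
  -- differentiability of x at α
  have hxdiff : ∀ i, DifferentiableAt ℝ (fun t => x t i) α :=
    inv_mulVec_diffAt (fun i j => (hKent i j α).differentiableAt)
      (fun i => (hbent i α).differentiableAt) (hKdet α ⟨hα0, hα1⟩)
  set dx : Fin D → ℝ := fun i => deriv (fun t => x t i) α with hdxdef
  have hx : HasDerivAt x dx α := hasDerivAt_pi.2 fun i => (hxdiff i).hasDerivAt
  set v₁ : Fin D → ℝ := A *ᵥ (x α - μ₁) with hv₁def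
  set v₂ : Fin D → ℝ := B *ᵥ (x α - μ₂) with hv₂def
  -- K α *ᵥ dx = v₁ - v₂
  have hKdx : K α *ᵥ dx = v₁ - v₂ := by
    funext i
    have hf : HasDerivAt (fun t => ∑ j, K t i j * x t j)
        (∑ j, ((B i j - A i j) * x α j + K α i j * dx j)) α :=
      HasDerivAt.fun_sum fun j _ => (hKent i j α).mul ((hasDerivAt_pi.1 hx) j)
    have hev : (fun t => ∑ j, K t i j * x t j) =ᶠ[nhds α] fun t => b t i := by
      filter_upwards [isOpen_Ioo.mem_nhds (⟨hα0, hα1⟩ : α ∈ Set.Ioo (0:ℝ) 1)] with t ht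
      have := congrFun (hKx t ht) i
      simpa [Matrix.mulVec, dotProduct] using this
    have hf' : HasDerivAt (fun t => b t i)
        (∑ j, ((B i j - A i j) * x α j + K α i j * dx j)) α :=
      hf.congr_of_eventuallyEq hev.symm
    have huniq := hf'.unique (hbent i α)
    have hexp : (Set.univ : Set (Fin D)) = Set.univ := rfl
    have h1 : (∑ j, ((B i j - A i j) * x α j + K α i j * dx j))
        = ((B *ᵥ x α) i - (A *ᵥ x α) i) + (K α *ᵥ dx) i := by
      rw [Finset.sum_add_distrib]
      congr 1
      · simp [Matrix.mulVec, dotProduct, sub_mul, Finset.sum_sub_distrib]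
    rw [h1] at huniq
    have hv1i : v₁ i = (A *ᵥ x α) i - (A *ᵥ μ₁) i := by
      rw [hv₁def, Matrix.mulVec_sub]; simp
    have hv2i : v₂ i = (B *ᵥ x α) i - (B *ᵥ μ₂) i := by
      rw [hv₂def, Matrix.mulVec_sub]; simp
    have : (v₁ - v₂) i = v₁ i - v₂ i := rfl
    rw [this, hv1i, hv2i]
    linarith [huniq]
  -- (1-α)•v₁ + α•v₂ = 0 and consequences
  have hvsum : ∀ i, (1 - α) * v₁ i + α * v₂ i = 0 := by
    intro i
    have h0 := congrFun (hKx α ⟨hα0, hα1⟩) i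
    have hL : (K α *ᵥ x α) i = (1 - α) * (A *ᵥ x α) i + α * (B *ᵥ x α) i := by
      simp [hKdef, Matrix.add_mulVec, Matrix.smul_mulVec, smul_eq_mul]
    have hR : b α i = (1 - α) * (A *ᵥ μ₁) i + α * (B *ᵥ μ₂) i := by
      simp [hbdef, smul_eq_mul]
    have hv1i : v₁ i = (A *ᵥ x α) i - (A *ᵥ μ₁) i := by
      rw [hv₁def, Matrix.mulVec_sub]; simp
    have hv2i : v₂ i = (B *ᵥ x α) i - (B *ᵥ μ₂) i := by
      rw [hv₂def, Matrix.mulVec_sub]; simp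
    rw [hL, hR] at h0
    rw [hv1i, hv2i]
    linarith
  have hv₂eq : v₂ = (-((1 - α) / α)) • v₁ := by
    funext i
    have := hvsum i
    have h : ((-((1 - α) / α)) • v₁) i = (-((1 - α) / α)) * v₁ i := rfl
    rw [h]
    field_simp
    linarith
  -- v₁ ≠ 0
  have hcancel : ∀ (M : Matrix (Fin D) (Fin D) ℝ) (hM : M.PosDef) (w : Fin D → ℝ),
      M *ᵥ w = 0 → w = 0 := by
    intro M hM w hw
    have h1 := congrArg (fun u => M⁻¹ *ᵥ u) hw
    simpa [Matrix.mulVec_mulVec,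
      Matrix.nonsing_inv_mul _ (isUnit_iff_ne_zero.2 hM.det_pos.ne')] using h1
  have hv₁ne : v₁ ≠ 0 := by
    intro h0
    have hx1 : x α - μ₁ = 0 := hcancel A hA _ h0
    have hv₂0 : v₂ = 0 := by rw [hv₂eq, h0, smul_zero]
    have hx2 : x α - μ₂ = 0 := hcancel B hB _ hv₂0
    apply hμ
    have e1 : x α = μ₁ := by funext i; have := congrFun hx1 i; simpa [sub_eq_zero] using this
    have e2 : x α = μ₂ := by funext i; have := congrFun hx2 i; simpa [sub_eq_zero] using this
    rw [← e1, e2]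
  -- s := dx ⬝ᵥ v₁ is positive
  have hKdx' : K α *ᵥ dx = α⁻¹ • v₁ := by
    rw [hKdx, hv₂eq]
    funext i
    have : (α⁻¹ • v₁) i = α⁻¹ * v₁ i := rfl
    simp only [Pi.sub_apply, Pi.smul_apply, smul_eq_mul, this]
    field_simp
    ring
  have hdx_eq : dx = α⁻¹ • ((K α)⁻¹ *ᵥ v₁) := by
    have h1 := congrArg (fun u => (K α)⁻¹ *ᵥ u) hKdx'
    simp only [Matrix.mulVec_mulVec] at h1
    rw [Matrix.nonsing_inv_mul _ (isUnit_iff_ne_zero.2 (hKdet α ⟨hα0, hα1⟩)),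
      Matrix.one_mulVec] at h1
    rw [h1, Matrix.mulVec_smul]
  have hs : 0 < dx ⬝ᵥ v₁ := by
    rw [hdx_eq, smul_dotProduct]
    apply mul_pos (by positivity)
    have hpd := (hK α ⟨hα0, hα1⟩).inv
    have := hpd.dotProduct_mulVec_pos hv₁ne
    simp only [star_trivial] at this
    rw [dotProduct_comm]
    exact this
  -- derivatives of the two component densities along the ridgeline
  have hridge : ridge D μ₁ μ₂ S₁ S₂ = x := rfl
  have hφ1 : HasDerivAt (φα D μ₁ μ₂ S₁ S₂ μ₁ S₁)
      (-(dx ⬝ᵥ v₁) * gauss D μ₁ S₁ (x α)) α := gauss_hasDerivAt μ₁ hS₁ hx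
  have hφ2 : HasDerivAt (φα D μ₁ μ₂ S₁ S₂ μ₂ S₂)
      (-(dx ⬝ᵥ v₂) * gauss D μ₂ S₂ (x α)) α := gauss_hasDerivAt μ₂ hS₂ hx
  have hd1 : deriv (φα D μ₁ μ₂ S₁ S₂ μ₁ S₁) α
      = -(dx ⬝ᵥ v₁) * gauss D μ₁ S₁ (x α) := hφ1.deriv
  have hd2 : deriv (φα D μ₁ μ₂ S₁ S₂ μ₂ S₂) α
      = ((1 - α) / α * (dx ⬝ᵥ v₁)) * gauss D μ₂ S₂ (x α) := by
    rw [hφ2.deriv, hv₂eq, dotProduct_smul, smul_eq_mul]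
    ring
  have hφ1val : φα D μ₁ μ₂ S₁ S₂ μ₁ S₁ α = gauss D μ₁ S₁ (x α) := rfl
  have hφ2val : φα D μ₁ μ₂ S₁ S₂ μ₂ S₂ α = gauss D μ₂ S₂ (x α) := rfl
  have hgpos : ∀ (ν : Fin D → ℝ) (T : Matrix (Fin D) (Fin D) ℝ), T.PosDef →
      0 < gauss D ν T (x α) := by
    intro ν T hT
    have h1 : (0:ℝ) < (2 * Real.pi) ^ D * T.det :=
      mul_pos (pow_pos (by positivity) D) hT.det_pos
    exact mul_pos (inv_pos.2 (Real.sqrt_pos.2 h1)) (Real.exp_pos _)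
  have hg1 := hgpos μ₁ S₁ hS₁
  have hg2 := hgpos μ₂ S₂ hS₂
  rw [hd1, hd2, hφ1val, hφ2val]
  set s := dx ⬝ᵥ v₁ with hsdef
  set g₁ := gauss D μ₁ S₁ (x α) with hg1def
  set g₂ := gauss D μ₂ S₂ (x α) with hg2def
  rw [inv_div]
  have hsne : s ≠ 0 := ne_of_gt hs
  have hg1ne : g₁ ≠ 0 := ne_of_gt hg1
  have hg2ne : g₂ ≠ 0 := ne_of_gt hg2
  have hαne : α ≠ 0 := ne_of_gt hα0
  have h1αne : (1 - α) ≠ 0 := ne_of_gt hα1'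
  field_simp
  ring
end

section
/- (Curvature formula) For the mixture of two multivariate normal densities evaluated along the ridgeline, the curvature function κ(α) = (φ_2''φ_1' - φ_1''φ_2')/(φ_1 φ_2) satisfies κ(α) = p(α)²(1 - α(1-α)p(α)), where p(α) = (μ_2 - μ_1)'Σ_1^{-1}S_α^{-1}Σ_2^{-1}S_α^{-1}Σ_2^{-1}S_α^{-1}Σ_1^{-1}(μ_2 - μ_1) and S_α = (1-α)Σ_1^{-1} + αΣ_2^{-1}. -/
open Matrix

section LinftyAux

attribute [local instance] Matrix.linftyOpNormedRing Matrix.linftyOpNormedAlgebra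

private noncomputable def entryCLM (D : ℕ) (i j : Fin D) :
    Matrix (Fin D) (Fin D) ℝ →L[ℝ] ℝ :=
  LinearMap.toContinuousLinearMap
    { toFun := fun M => M i j, map_add' := fun _ _ => rfl, map_smul' := fun _ _ => rfl }

private theorem hasDerivAt_inv_entry {D : ℕ} {x : ℝ} {A C : Matrix (Fin D) (Fin D) ℝ}
    (h : IsUnit (A + x • C)) (i j : Fin D) :
    HasDerivAt (fun t : ℝ => Ring.inverse (A + t • C) i j)
      ((-(Ring.inverse (A + x • C) * C * Ring.inverse (A + x • C))) i j) x := by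
  obtain ⟨u, hu⟩ := h
  have hS : HasDerivAt (fun t : ℝ => A + t • C) C x := by
    exact (((hasDerivAt_id x).smul_const C).const_add A).congr_deriv (one_smul _ _)
  have hinv : HasFDerivAt (Ring.inverse : Matrix (Fin D) (Fin D) ℝ → _)
      (-ContinuousLinearMap.mulLeftRight ℝ _ (↑u⁻¹) (↑u⁻¹)) (A + x • C) := by
    rw [← hu]; exact hasFDerivAt_ringInverse u
  have h1 : HasDerivAt (fun t : ℝ => Ring.inverse (A + t • C))
      (-((↑u⁻¹ : Matrix (Fin D) (Fin D) ℝ) * C * (↑u⁻¹ : Matrix (Fin D) (Fin D) ℝ))) x := by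
    have h := hinv.comp_hasDerivAt x hS
    simp only [ContinuousLinearMap.neg_apply, ContinuousLinearMap.mulLeftRight_apply] at h
    exact h
  have h2 := (entryCLM D i j).hasFDerivAt.comp_hasDerivAt x h1
  have hru : (↑u⁻¹ : Matrix (Fin D) (Fin D) ℝ) = Ring.inverse (A + x • C) := by
    rw [← hu, Ring.inverse_unit]
  rw [hru] at h2
  exact h2

end LinftyAux

attribute [local instance] Matrix.normedAddCommGroup Matrix.normedSpace

private theorem hasDerivAt_inv_curve {D : ℕ} {x : ℝ} {A C : Matrix (Fin D) (Fin D) ℝ}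
    (h : IsUnit (A + x • C)) :
    HasDerivAt (fun t : ℝ => Ring.inverse (A + t • C))
      (-(Ring.inverse (A + x • C) * C * Ring.inverse (A + x • C))) x := by
  apply hasDerivAt_pi.2
  intro i
  apply hasDerivAt_pi.2
  intro j
  exact hasDerivAt_inv_entry h i j

private theorem hasDerivAt_dot {D : ℕ} {x : ℝ} {f g : ℝ → Fin D → ℝ} {f' g' : Fin D → ℝ}
    (hf : HasDerivAt f f' x) (hg : HasDerivAt g g' x) :
    HasDerivAt (fun t => f t ⬝ᵥ g t) (f' ⬝ᵥ g x + f x ⬝ᵥ g') x := by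
  simp only [dotProduct]
  rw [← Finset.sum_add_distrib]
  exact HasDerivAt.fun_sum fun i _ =>
    ((hasDerivAt_pi.1 hf i).mul (hasDerivAt_pi.1 hg i))

private theorem hasDerivAt_mulVecFn {D : ℕ} {x : ℝ} {M : ℝ → Matrix (Fin D) (Fin D) ℝ}
    {v : ℝ → Fin D → ℝ} {M' : Matrix (Fin D) (Fin D) ℝ} {v' : Fin D → ℝ}
    (hM : HasDerivAt M M' x) (hv : HasDerivAt v v' x) :
    HasDerivAt (fun t => M t *ᵥ v t) (M' *ᵥ v x + M x *ᵥ v') x := by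
  rw [hasDerivAt_pi]
  intro i
  have key : ∀ j, HasDerivAt (fun t => M t i j * v t j) (M' i j * v x j + M x i j * v' j) x :=
    fun j => (hasDerivAt_pi.1 (hasDerivAt_pi.1 hM i) j).mul (hasDerivAt_pi.1 hv j)
  have hsum : HasDerivAt (fun t => ∑ j, M t i j * v t j)
      (∑ j, (M' i j * v x j + M x i j * v' j)) x := HasDerivAt.fun_sum fun j _ => key j
  simpa [Matrix.mulVec, dotProduct, Finset.sum_add_distrib] using hsum

private theorem hasDerivAt_cMulVec {D : ℕ} {x : ℝ} (A : Matrix (Fin D) (Fin D) ℝ)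
    {v : ℝ → Fin D → ℝ} {v' : Fin D → ℝ} (hv : HasDerivAt v v' x) :
    HasDerivAt (fun t => A *ᵥ v t) (A *ᵥ v') x := by
  simpa using hasDerivAt_mulVecFn (hasDerivAt_const x A) hv

private theorem dot_symm {D : ℕ} {M : Matrix (Fin D) (Fin D) ℝ} (hM : Mᵀ = M)
    (x y : Fin D → ℝ) : x ⬝ᵥ (M *ᵥ y) = (M *ᵥ x) ⬝ᵥ y := by
  rw [Matrix.dotProduct_mulVec]
  conv_lhs => rw [← hM, Matrix.vecMul_transpose]

set_option maxHeartbeats 1600000 in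
/-- Theorem 3 (curvature formula): `κ(α) = p(α)² (1 - α(1-α) p(α))`. -/
theorem curvature_formula
    (D : ℕ) (μ₁ μ₂ : Fin D → ℝ) (S₁ S₂ : Matrix (Fin D) (Fin D) ℝ)
    (hS₁ : S₁.PosDef) (hS₂ : S₂.PosDef)
    (α : ℝ) (hα : α ∈ Set.Icc (0 : ℝ) 1) :
    (deriv (deriv (φα D μ₁ μ₂ S₁ S₂ μ₂ S₂)) α * deriv (φα D μ₁ μ₂ S₁ S₂ μ₁ S₁) α -
          deriv (deriv (φα D μ₁ μ₂ S₁ S₂ μ₁ S₁)) α * deriv (φα D μ₁ μ₂ S₁ S₂ μ₂ S₂) α) /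
        (φα D μ₁ μ₂ S₁ S₂ μ₁ S₁ α * φα D μ₁ μ₂ S₁ S₂ μ₂ S₂ α) =
      ((μ₂ - μ₁) ⬝ᵥ ((S₁⁻¹ * ((1 - α) • S₁⁻¹ + α • S₂⁻¹)⁻¹ * S₂⁻¹ *
              ((1 - α) • S₁⁻¹ + α • S₂⁻¹)⁻¹ * S₂⁻¹ *
              ((1 - α) • S₁⁻¹ + α • S₂⁻¹)⁻¹ * S₁⁻¹) *ᵥ (μ₂ - μ₁))) ^ 2 *
        (1 - α * (1 - α) *
          ((μ₂ - μ₁) ⬝ᵥ ((S₁⁻¹ * ((1 - α) • S₁⁻¹ + α • S₂⁻¹)⁻¹ * S₂⁻¹ *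
              ((1 - α) • S₁⁻¹ + α • S₂⁻¹)⁻¹ * S₂⁻¹ *
              ((1 - α) • S₁⁻¹ + α • S₂⁻¹)⁻¹ * S₁⁻¹) *ᵥ (μ₂ - μ₁)))) := by
  classical
  set A := S₁⁻¹ with hAdef
  set B := S₂⁻¹ with hBdef
  set δ : Fin D → ℝ := μ₂ - μ₁ with hδdef
  set C : Matrix (Fin D) (Fin D) ℝ := B - A with hCdef
  set S : ℝ → Matrix (Fin D) (Fin D) ℝ := fun t => A + t • C with hSdef
  set F : ℝ → Matrix (Fin D) (Fin D) ℝ := fun t => Ring.inverse (S t) with hFdef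
  have hdet₁ : IsUnit S₁.det := hS₁.det_pos.ne'.isUnit
  have hdet₂ : IsUnit S₂.det := hS₂.det_pos.ne'.isUnit
  have hA : A.PosDef := by rw [hAdef]; exact hS₁.inv
  have hB : B.PosDef := by rw [hBdef]; exact hS₂.inv
  have hAt : Aᵀ = A := by
    rw [← Matrix.conjTranspose_eq_transpose_of_trivial]; exact hA.1
  have hBt : Bᵀ = B := by
    rw [← Matrix.conjTranspose_eq_transpose_of_trivial]; exact hB.1
  have hCt : Cᵀ = C := by rw [hCdef, Matrix.transpose_sub, hAt, hBt]
  have hcomb : ∀ t : ℝ, (1 - t) • A + t • B = S t := by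
    intro t; rw [hSdef]; simp only [hCdef]; module
  have hSt : ∀ t : ℝ, (S t)ᵀ = S t := by
    intro t
    rw [hSdef]
    simp only [Matrix.transpose_add, Matrix.transpose_smul, hAt, hCt]
  set U : Set ℝ := {t : ℝ | IsUnit (S t)} with hUdef
  have hUopen : IsOpen U := by
    have hcont : Continuous fun t : ℝ => (S t).det := by
      apply Continuous.matrix_det
      rw [hSdef]
      fun_prop
    have hpre : U = (fun t : ℝ => (S t).det) ⁻¹' {y : ℝ | y ≠ 0} := by
      ext t
      simp only [hUdef, Set.mem_setOf_eq, Set.mem_preimage,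
        Matrix.isUnit_iff_isUnit_det, isUnit_iff_ne_zero]
    rw [hpre]
    exact IsOpen.preimage hcont isOpen_ne
  have hSpos : ∀ t ∈ Set.Icc (0:ℝ) 1, (S t).PosDef := by
    intro t ht
    rw [← hcomb t]
    refine Matrix.PosDef.of_dotProduct_mulVec_pos ?_ ?_
    · show _ᴴ = _
      rw [Matrix.conjTranspose_eq_transpose_of_trivial]
      simp only [Matrix.transpose_add, Matrix.transpose_smul, hAt, hBt]
    · intro x hx
      have h1 := hA.dotProduct_mulVec_pos hx
      have h2 := hB.dotProduct_mulVec_pos hx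
      simp only [star_trivial] at h1 h2 ⊢
      rw [Matrix.add_mulVec, Matrix.smul_mulVec, Matrix.smul_mulVec,
        dotProduct_add, dotProduct_smul, dotProduct_smul, smul_eq_mul, smul_eq_mul]
      obtain ⟨ht0, ht1⟩ := ht
      rcases eq_or_lt_of_le ht1 with h|h
      · subst h; simpa using h2
      · have k1 := mul_pos (by linarith : (0:ℝ) < 1 - t) h1
        have k2 := mul_nonneg ht0 h2.le
        linarith
  have hIccU : Set.Icc (0:ℝ) 1 ⊆ U := fun t ht => (hSpos t ht).isUnit
  have hαU : α ∈ U := hIccU hα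
  have hdetU : ∀ t ∈ U, IsUnit (S t).det := fun t ht =>
    (Matrix.isUnit_iff_isUnit_det _).1 ht
  have hFinv : ∀ t : ℝ, (S t)⁻¹ = F t := fun t =>
    Matrix.nonsing_inv_eq_ringInverse _
  have hSF : ∀ t ∈ U, S t * F t = 1 := fun t ht => by
    rw [← hFinv t]; exact Matrix.mul_nonsing_inv _ (hdetU t ht)
  have hFS : ∀ t ∈ U, F t * S t = 1 := fun t ht => by
    rw [← hFinv t]; exact Matrix.nonsing_inv_mul _ (hdetU t ht)
  have hFt : ∀ t ∈ U, (F t)ᵀ = F t := fun t ht => by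
    rw [← hFinv t, Matrix.transpose_nonsing_inv, hSt]
  -- basic matrix identities on U
  have hAF : ∀ t ∈ U, A * F t = 1 - t • (C * F t) := by
    intro t ht
    have h1 : (A + t • C) * F t = 1 := by
      have := hSF t ht; rw [hSdef] at this; exact this
    rw [Matrix.add_mul, smul_mul_assoc] at h1
    rw [← h1]; abel
  have hBF : ∀ t ∈ U, B * F t = 1 + (1 - t) • (C * F t) := by
    intro t ht
    have hSB : S t = B - (1 - t) • C := by
      rw [hSdef]; simp only [hCdef]; module
    have h1 : (B - (1 - t) • C) * F t = 1 := by rw [← hSB]; exact hSF t ht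
    rw [Matrix.sub_mul, smul_mul_assoc] at h1
    rw [← h1]; abel
  have hAS₁ : A * S₁ = 1 := by rw [hAdef]; exact Matrix.nonsing_inv_mul S₁ hdet₁
  have hS₁A : S₁ * A = 1 := by rw [hAdef]; exact Matrix.mul_nonsing_inv S₁ hdet₁
  have hBS₂ : B * S₂ = 1 := by rw [hBdef]; exact Matrix.nonsing_inv_mul S₂ hdet₂
  have hS₂B : S₂ * B = 1 := by rw [hBdef]; exact Matrix.mul_nonsing_inv S₂ hdet₂
  have hK : ∀ t ∈ U, A * (F t * B) = B * (F t * A) := by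
    intro t ht
    have hS₂B' : ∀ X : Matrix (Fin D) (Fin D) ℝ, S₂ * (B * X) = X := fun X => by
      rw [← Matrix.mul_assoc, hS₂B, Matrix.one_mul]
    have hS₁A' : ∀ X : Matrix (Fin D) (Fin D) ℝ, S₁ * (A * X) = X := fun X => by
      rw [← Matrix.mul_assoc, hS₁A, Matrix.one_mul]
    have e1 : S₂ * S t * S₁ = S₁ * S t * S₂ := by
      rw [← hcomb t]
      simp only [Matrix.mul_add, Matrix.add_mul, mul_smul_comm, smul_mul_assoc,
        Matrix.mul_assoc, hAS₁, hBS₂, hS₂B', hS₁A', Matrix.mul_one, Matrix.one_mul]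
    have e2 : (S₂ * S t * S₁)⁻¹ = A * (F t * B) := by
      rw [Matrix.mul_inv_rev, Matrix.mul_inv_rev, ← hAdef, ← hBdef, hFinv t]
    have e3 : (S₁ * S t * S₂)⁻¹ = B * (F t * A) := by
      rw [Matrix.mul_inv_rev, Matrix.mul_inv_rev, ← hAdef, ← hBdef, hFinv t]
    rw [← e2, ← e3, e1]
  -- vector-valued functions of the parameter
  set u : ℝ → Fin D → ℝ := fun t => F t *ᵥ (B *ᵥ δ) with hudef
  set w : ℝ → Fin D → ℝ := fun t => F t *ᵥ (A *ᵥ δ) with hwdef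
  set m : ℝ → Fin D → ℝ := fun t => A *ᵥ u t with hmdef
  set uD : ℝ → Fin D → ℝ := fun t => -(F t *ᵥ (C *ᵥ u t)) with huDdef
  set wD : ℝ → Fin D → ℝ := fun t => -(F t *ᵥ (C *ᵥ w t)) with hwDdef
  set p : ℝ → ℝ := fun t => δ ⬝ᵥ ((A * F t * B * F t * B * F t * A) *ᵥ δ) with hpdef
  set g : ℝ → ℝ := fun t => u t ⬝ᵥ m t with hgdef
  set hsc : ℝ → ℝ := fun t => w t ⬝ᵥ (B *ᵥ w t) with hscdef
  set q₁ : ℝ → ℝ := fun t => t ^ 2 * g t with hq₁def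
  set q₂ : ℝ → ℝ := fun t => (1 - t) ^ 2 * hsc t with hq₂def
  -- differentiability facts
  have hFd : ∀ t ∈ U, HasDerivAt F (-(F t * C * F t)) t := by
    intro t ht
    have ht' : IsUnit (A + t • C) := by
      have := ht; rw [hUdef, Set.mem_setOf_eq, hSdef] at this; exact this
    simp only [hFdef, hSdef]
    exact hasDerivAt_inv_curve ht'
  have hud : ∀ t ∈ U, HasDerivAt u (uD t) t := by
    intro t ht
    have h1 := hasDerivAt_mulVecFn (hFd t ht) (hasDerivAt_const t (B *ᵥ δ))
    simp only [hudef, huDdef]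
    convert h1 using 1
    simp [Matrix.mulVec_zero, Matrix.neg_mulVec, ← Matrix.mulVec_mulVec]
  have hwd : ∀ t ∈ U, HasDerivAt w (wD t) t := by
    intro t ht
    have h1 := hasDerivAt_mulVecFn (hFd t ht) (hasDerivAt_const t (A *ᵥ δ))
    simp only [hwdef, hwDdef]
    convert h1 using 1
    simp [Matrix.mulVec_zero, Matrix.neg_mulVec, ← Matrix.mulVec_mulVec]
  have hmd : ∀ t ∈ U, HasDerivAt m (A *ᵥ uD t) t := by
    intro t ht
    simp only [hmdef]
    exact hasDerivAt_cMulVec A (hud t ht)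
  have hgd : ∀ t ∈ U, HasDerivAt g (2 * (uD t ⬝ᵥ m t)) t := by
    intro t ht
    have h1 := hasDerivAt_dot (hud t ht) (hmd t ht)
    have e : u t ⬝ᵥ (A *ᵥ uD t) = uD t ⬝ᵥ m t := by
      rw [dot_symm hAt, dotProduct_comm]
    simp only [hgdef]
    convert h1 using 1
    rw [e]; ring
  have hscd : ∀ t ∈ U, HasDerivAt hsc (2 * (wD t ⬝ᵥ (B *ᵥ w t))) t := by
    intro t ht
    have h1 := hasDerivAt_dot (hwd t ht) (hasDerivAt_cMulVec B (hwd t ht))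
    have e : w t ⬝ᵥ (B *ᵥ wD t) = wD t ⬝ᵥ (B *ᵥ w t) := by
      rw [dot_symm hBt, dotProduct_comm]
    simp only [hscdef]
    convert h1 using 1
    rw [e]; ring
  -- the key ridgeline identities
  have hBwRaw : ∀ t ∈ U, B *ᵥ (F t *ᵥ (A *ᵥ δ)) = A *ᵥ (F t *ᵥ (B *ᵥ δ)) := by
    intro t ht
    simp only [Matrix.mulVec_mulVec]
    rw [hK t ht]
  have hBw : ∀ t ∈ U, B *ᵥ w t = m t := by
    intro t ht
    simp only [hmdef, hudef, hwdef]
    exact hBwRaw t ht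
  have hmEq : ∀ t ∈ U, m t = B *ᵥ δ - t • (C *ᵥ u t) := by
    intro t ht
    simp only [hmdef, hudef]
    rw [Matrix.mulVec_mulVec, hAF t ht, Matrix.sub_mulVec, Matrix.one_mulVec,
      Matrix.smul_mulVec, ← Matrix.mulVec_mulVec]
  have hBwEq : ∀ t ∈ U, B *ᵥ w t = A *ᵥ δ + (1 - t) • (C *ᵥ w t) := by
    intro t ht
    simp only [hwdef]
    rw [Matrix.mulVec_mulVec, hBF t ht, Matrix.add_mulVec, Matrix.one_mulVec,
      Matrix.smul_mulVec, ← Matrix.mulVec_mulVec]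
  have hV1 : ∀ t ∈ U, F t *ᵥ m t = u t + t • uD t := by
    intro t ht
    rw [hmEq t ht, Matrix.mulVec_sub, Matrix.mulVec_smul]
    simp only [hudef, huDdef, smul_neg]
    module
  have hV2 : ∀ t ∈ U, F t *ᵥ m t = w t - (1 - t) • wD t := by
    intro t ht
    rw [← hBw t ht, hBwEq t ht, Matrix.mulVec_add, Matrix.mulVec_smul]
    simp only [hwdef, hwDdef, smul_neg]
    module
  have hpm : ∀ t ∈ U, p t = m t ⬝ᵥ (F t *ᵥ m t) := by
    intro t ht
    simp only [hpdef, hmdef, hudef, ← Matrix.mulVec_mulVec]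
    rw [dot_symm hAt, dot_symm (hFt t ht), dot_symm hBt, hBwRaw t ht]
  have hI1 : ∀ t ∈ U, p t = g t + t * (uD t ⬝ᵥ m t) := by
    intro t ht
    rw [hpm t ht, hV1 t ht, dotProduct_add, dotProduct_smul, smul_eq_mul,
      dotProduct_comm (m t) (u t), dotProduct_comm (m t) (uD t)]
  have hI2 : ∀ t ∈ U, p t = hsc t - (1 - t) * (wD t ⬝ᵥ (B *ᵥ w t)) := by
    intro t ht
    rw [hpm t ht, hV2 t ht, ← hBw t ht, dotProduct_sub, dotProduct_smul, smul_eq_mul,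
      dotProduct_comm (B *ᵥ w t) (w t), dotProduct_comm (B *ᵥ w t) (wD t)]
  -- derivatives of the quadratic forms
  have hq₁d : ∀ t ∈ U, HasDerivAt q₁ (2 * t * p t) t := by
    intro t ht
    have h1 := (hasDerivAt_pow 2 t).mul (hgd t ht)
    simp only [hq₁def]
    refine h1.congr_deriv ?_
    rw [hI1 t ht]
    push_cast
    ring
  have hq₂d : ∀ t ∈ U, HasDerivAt q₂ (-(2 * (1 - t) * p t)) t := by
    intro t ht
    have hb0 : HasDerivAt (fun s : ℝ => 1 - s) (-1) t := by
      simpa using (hasDerivAt_id t).const_sub 1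
    have hb := hb0.pow 2
    have h1 := hb.mul (hscd t ht)
    simp only [hq₂def]
    refine h1.congr_deriv ?_
    rw [hI2 t ht]
    simp only [Pi.pow_apply]
    push_cast
    ring
  -- the densities along the ridgeline
  set c₁ : ℝ := (Real.sqrt ((2 * Real.pi) ^ D * S₁.det))⁻¹ with hc₁def
  set c₂ : ℝ := (Real.sqrt ((2 * Real.pi) ^ D * S₂.det))⁻¹ with hc₂def
  have hc₁pos : 0 < c₁ := by
    rw [hc₁def]
    exact inv_pos.2 (Real.sqrt_pos.2 (mul_pos (pow_pos (by positivity) D) hS₁.det_pos))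
  have hc₂pos : 0 < c₂ := by
    rw [hc₂def]
    exact inv_pos.2 (Real.sqrt_pos.2 (mul_pos (pow_pos (by positivity) D) hS₂.det_pos))
  have hy : ∀ t : ℝ, ridge D μ₁ μ₂ S₁ S₂ t
      = F t *ᵥ ((1 - t) • (A *ᵥ μ₁) + t • (B *ᵥ μ₂)) := by
    intro t
    show ((1 - t) • S₁⁻¹ + t • S₂⁻¹)⁻¹ *ᵥ ((1 - t) • (S₁⁻¹ *ᵥ μ₁) + t • (S₂⁻¹ *ᵥ μ₂)) = _
    rw [← hAdef, ← hBdef, hcomb t, hFinv t]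
  have hy₁ : ∀ t ∈ U, ridge D μ₁ μ₂ S₁ S₂ t - μ₁ = t • u t := by
    intro t ht
    rw [hy t]
    have hμ : μ₁ = F t *ᵥ (S t *ᵥ μ₁) := by
      rw [Matrix.mulVec_mulVec, hFS t ht, Matrix.one_mulVec]
    have hcv : ((1 - t) • (A *ᵥ μ₁) + t • (B *ᵥ μ₂)) - S t *ᵥ μ₁ = t • (B *ᵥ δ) := by
      rw [← hcomb t, Matrix.add_mulVec, Matrix.smul_mulVec,
        Matrix.smul_mulVec, hδdef, Matrix.mulVec_sub]
      module
    calc F t *ᵥ ((1 - t) • (A *ᵥ μ₁) + t • (B *ᵥ μ₂)) - μ₁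
        = F t *ᵥ (((1 - t) • (A *ᵥ μ₁) + t • (B *ᵥ μ₂)) - S t *ᵥ μ₁) := by
          rw [Matrix.mulVec_sub, ← hμ]
      _ = F t *ᵥ (t • (B *ᵥ δ)) := by rw [hcv]
      _ = t • u t := by rw [Matrix.mulVec_smul]
  have hy₂ : ∀ t ∈ U, ridge D μ₁ μ₂ S₁ S₂ t - μ₂ = -((1 - t) • w t) := by
    intro t ht
    rw [hy t]
    have hμ : μ₂ = F t *ᵥ (S t *ᵥ μ₂) := by
      rw [Matrix.mulVec_mulVec, hFS t ht, Matrix.one_mulVec]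
    have hcv : ((1 - t) • (A *ᵥ μ₁) + t • (B *ᵥ μ₂)) - S t *ᵥ μ₂ = -((1 - t) • (A *ᵥ δ)) := by
      rw [← hcomb t, Matrix.add_mulVec, Matrix.smul_mulVec,
        Matrix.smul_mulVec, hδdef, Matrix.mulVec_sub]
      module
    calc F t *ᵥ ((1 - t) • (A *ᵥ μ₁) + t • (B *ᵥ μ₂)) - μ₂
        = F t *ᵥ (((1 - t) • (A *ᵥ μ₁) + t • (B *ᵥ μ₂)) - S t *ᵥ μ₂) := by
          rw [Matrix.mulVec_sub, ← hμ]
      _ = F t *ᵥ (-((1 - t) • (A *ᵥ δ))) := by rw [hcv]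
      _ = -((1 - t) • w t) := by rw [Matrix.mulVec_neg, Matrix.mulVec_smul]
  have hEq₁ : ∀ t ∈ U, φα D μ₁ μ₂ S₁ S₂ μ₁ S₁ t = c₁ * Real.exp (-(q₁ t) / 2) := by
    intro t ht
    show c₁ * Real.exp (-((ridge D μ₁ μ₂ S₁ S₂ t - μ₁) ⬝ᵥ
        (S₁⁻¹ *ᵥ (ridge D μ₁ μ₂ S₁ S₂ t - μ₁))) / 2) = _
    congr 2
    rw [← hAdef, hy₁ t ht, Matrix.mulVec_smul, dotProduct_smul, smul_dotProduct,
      smul_eq_mul, smul_eq_mul]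
    simp only [hq₁def, hgdef, hmdef]
    ring
  have hEq₂ : ∀ t ∈ U, φα D μ₁ μ₂ S₁ S₂ μ₂ S₂ t = c₂ * Real.exp (-(q₂ t) / 2) := by
    intro t ht
    show c₂ * Real.exp (-((ridge D μ₁ μ₂ S₁ S₂ t - μ₂) ⬝ᵥ
        (S₂⁻¹ *ᵥ (ridge D μ₁ μ₂ S₁ S₂ t - μ₂))) / 2) = _
    congr 2
    rw [← hBdef, hy₂ t ht, Matrix.mulVec_neg, Matrix.mulVec_smul, dotProduct_neg,
      neg_dotProduct, neg_neg, dotProduct_smul, smul_dotProduct, smul_eq_mul, smul_eq_mul]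
    simp only [hq₂def, hscdef]
    ring
  have hφ₁pos : 0 < φα D μ₁ μ₂ S₁ S₂ μ₁ S₁ α := by
    rw [hEq₁ α hαU]; exact mul_pos hc₁pos (Real.exp_pos _)
  have hφ₂pos : 0 < φα D μ₁ μ₂ S₁ S₂ μ₂ S₂ α := by
    rw [hEq₂ α hαU]; exact mul_pos hc₂pos (Real.exp_pos _)
  -- first derivatives of the densities
  have hφ₁d : ∀ t ∈ U, HasDerivAt (φα D μ₁ μ₂ S₁ S₂ μ₁ S₁)
      (-(t * p t) * φα D μ₁ μ₂ S₁ S₂ μ₁ S₁ t) t := by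
    intro t ht
    have hψ : HasDerivAt (fun s => c₁ * Real.exp (-(q₁ s) / 2))
        (-(t * p t) * (c₁ * Real.exp (-(q₁ t) / 2))) t := by
      have h1 := ((((hq₁d t ht).neg).div_const 2).exp).const_mul c₁
      refine h1.congr_deriv ?_
      simp only [Pi.neg_apply]
      ring
    have hev : φα D μ₁ μ₂ S₁ S₂ μ₁ S₁ =ᶠ[nhds t] fun s => c₁ * Real.exp (-(q₁ s) / 2) :=
      Filter.eventuallyEq_of_mem (hUopen.mem_nhds ht) fun s hs => hEq₁ s hs
    have h2 := hψ.congr_of_eventuallyEq hev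
    rwa [← hEq₁ t ht] at h2
  have hφ₂d : ∀ t ∈ U, HasDerivAt (φα D μ₁ μ₂ S₁ S₂ μ₂ S₂)
      ((1 - t) * p t * φα D μ₁ μ₂ S₁ S₂ μ₂ S₂ t) t := by
    intro t ht
    have hψ : HasDerivAt (fun s => c₂ * Real.exp (-(q₂ s) / 2))
        ((1 - t) * p t * (c₂ * Real.exp (-(q₂ t) / 2))) t := by
      have h1 := ((((hq₂d t ht).neg).div_const 2).exp).const_mul c₂
      refine h1.congr_deriv ?_
      simp only [Pi.neg_apply]
      ring
    have hev : φα D μ₁ μ₂ S₁ S₂ μ₂ S₂ =ᶠ[nhds t] fun s => c₂ * Real.exp (-(q₂ s) / 2) :=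
      Filter.eventuallyEq_of_mem (hUopen.mem_nhds ht) fun s hs => hEq₂ s hs
    have h2 := hψ.congr_of_eventuallyEq hev
    rwa [← hEq₂ t ht] at h2
  -- derivative of p at α
  obtain ⟨pd, hpd⟩ : ∃ d, HasDerivAt p d α := by
    have h1 := hasDerivAt_cMulVec B (hwd α hαU)
    have h2 := hasDerivAt_mulVecFn (hFd α hαU) h1
    have h3 := hasDerivAt_cMulVec B h2
    have h4 := hasDerivAt_mulVecFn (hFd α hαU) h3
    have h5 := hasDerivAt_cMulVec A h4
    have h6 := hasDerivAt_dot (hasDerivAt_const α δ) h5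
    have hfun : p = fun t => δ ⬝ᵥ (A *ᵥ (F t *ᵥ (B *ᵥ (F t *ᵥ (B *ᵥ w t))))) := by
      funext s
      simp only [hpdef, hwdef, ← Matrix.mulVec_mulVec]
    rw [hfun]
    exact ⟨_, h6⟩
  -- second derivatives
  have hG₁ : HasDerivAt (fun t => -(t * p t) * φα D μ₁ μ₂ S₁ S₂ μ₁ S₁ t)
      (-(1 * p α + α * pd) * φα D μ₁ μ₂ S₁ S₂ μ₁ S₁ α +
        -(α * p α) * (-(α * p α) * φα D μ₁ μ₂ S₁ S₂ μ₁ S₁ α)) α :=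
    (((hasDerivAt_id α).mul hpd).neg).mul (hφ₁d α hαU)
  have hG₂ : HasDerivAt (fun t => (1 - t) * p t * φα D μ₁ μ₂ S₁ S₂ μ₂ S₂ t)
      ((-1 * p α + (1 - α) * pd) * φα D μ₁ μ₂ S₁ S₂ μ₂ S₂ α +
        (1 - α) * p α * ((1 - α) * p α * φα D μ₁ μ₂ S₁ S₂ μ₂ S₂ α)) α :=
    ((((hasDerivAt_id α).const_sub 1).mul hpd).mul (hφ₂d α hαU))
  have hdd₁ : deriv (deriv (φα D μ₁ μ₂ S₁ S₂ μ₁ S₁)) α =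
      -(1 * p α + α * pd) * φα D μ₁ μ₂ S₁ S₂ μ₁ S₁ α +
        -(α * p α) * (-(α * p α) * φα D μ₁ μ₂ S₁ S₂ μ₁ S₁ α) := by
    have hev : deriv (φα D μ₁ μ₂ S₁ S₂ μ₁ S₁) =ᶠ[nhds α]
        fun t => -(t * p t) * φα D μ₁ μ₂ S₁ S₂ μ₁ S₁ t :=
      Filter.eventuallyEq_of_mem (hUopen.mem_nhds hαU) fun s hs => (hφ₁d s hs).deriv
    rw [hev.deriv_eq]
    exact hG₁.deriv
  have hdd₂ : deriv (deriv (φα D μ₁ μ₂ S₁ S₂ μ₂ S₂)) α =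
      (-1 * p α + (1 - α) * pd) * φα D μ₁ μ₂ S₁ S₂ μ₂ S₂ α +
        (1 - α) * p α * ((1 - α) * p α * φα D μ₁ μ₂ S₁ S₂ μ₂ S₂ α) := by
    have hev : deriv (φα D μ₁ μ₂ S₁ S₂ μ₂ S₂) =ᶠ[nhds α]
        fun t => (1 - t) * p t * φα D μ₁ μ₂ S₁ S₂ μ₂ S₂ t :=
      Filter.eventuallyEq_of_mem (hUopen.mem_nhds hαU) fun s hs => (hφ₂d s hs).deriv
    rw [hev.deriv_eq]
    exact hG₂.deriv
  have hd1 : deriv (φα D μ₁ μ₂ S₁ S₂ μ₁ S₁) α =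
      -(α * p α) * φα D μ₁ μ₂ S₁ S₂ μ₁ S₁ α := (hφ₁d α hαU).deriv
  have hd2 : deriv (φα D μ₁ μ₂ S₁ S₂ μ₂ S₂) α =
      (1 - α) * p α * φα D μ₁ μ₂ S₁ S₂ μ₂ S₂ α := (hφ₂d α hαU).deriv
  -- rewrite the target expression
  rw [hcomb α, hFinv α]
  have hfold : δ ⬝ᵥ ((A * F α * B * F α * B * F α * A) *ᵥ δ) = p α := by
    simp only [hpdef]
  rw [hfold, hdd₁, hdd₂, hd1, hd2]
  have h1ne : φα D μ₁ μ₂ S₁ S₂ μ₁ S₁ α ≠ 0 := ne_of_gt hφ₁pos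
  have h2ne : φα D μ₁ μ₂ S₁ S₂ μ₂ S₂ α ≠ 0 := ne_of_gt hφ₂pos
  field_simp
  ring
end

section
/- (Proportional variance case) If Σ_2 = σ²Σ_1 with σ > 0, then the zeroes of κ(α) in [0,1] coincide with the zeroes in [0,1] of the cubic q_1(α) = (σ²(1-α) + α)³ - α(1-α)μ²σ², where μ² = (μ_2 - μ_1)'Σ_1^{-1}(μ_2 - μ_1). -/
open Matrix

/-- The function \`p(α)\` from the curvature formula. -/
noncomputable def pfun (D : ℕ) (μ₁ μ₂ : Fin D → ℝ)
    (S₁ S₂ : Matrix (Fin D) (Fin D) ℝ) (α : ℝ) : ℝ :=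
  (μ₂ - μ₁) ⬝ᵥ ((S₁⁻¹ * ((1 - α) • S₁⁻¹ + α • S₂⁻¹)⁻¹ * S₂⁻¹ *
      ((1 - α) • S₁⁻¹ + α • S₂⁻¹)⁻¹ * S₂⁻¹ *
      ((1 - α) • S₁⁻¹ + α • S₂⁻¹)⁻¹ * S₁⁻¹) *ᵥ (μ₂ - μ₁))

/-- Proportional-variance case `Σ₂ = σ² Σ₁`: the zeroes of
`κ(α) = p(α)²(1 - α(1-α)p(α))` in `[0,1]` coincide with those of the cubic
`q₁(α) = (σ²(1-α)+α)³ - α(1-α) μ² σ²`. -/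
theorem curvature_zeroes_proportional_variance
    (D : ℕ) (μ₁ μ₂ : Fin D → ℝ) (S₁ S₂ : Matrix (Fin D) (Fin D) ℝ)
    (hS₁ : S₁.PosDef) (σ : ℝ) (hσ : 0 < σ) (hS₂ : S₂ = (σ ^ 2) • S₁)
    (hμ : μ₁ ≠ μ₂) :
    {α ∈ Set.Icc (0 : ℝ) 1 |
        pfun D μ₁ μ₂ S₁ S₂ α ^ 2 * (1 - α * (1 - α) * pfun D μ₁ μ₂ S₁ S₂ α) = 0} =
      {α ∈ Set.Icc (0 : ℝ) 1 |
        (σ ^ 2 * (1 - α) + α) ^ 3 -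
          α * (1 - α) * ((μ₂ - μ₁) ⬝ᵥ (S₁⁻¹ *ᵥ (μ₂ - μ₁))) * σ ^ 2 = 0} := by
  have hσ2 : (0:ℝ) < σ ^ 2 := by positivity
  have hv : μ₂ - μ₁ ≠ 0 := sub_ne_zero.mpr (Ne.symm hμ)
  set v := μ₂ - μ₁ with hvdef
  set m : ℝ := v ⬝ᵥ (S₁⁻¹ *ᵥ v) with hm
  have hmpos : 0 < m := by
    have := hS₁.inv.dotProduct_mulVec_pos hv
    simpa [hm, star_trivial] using this
  have hdet : IsUnit S₁.det := isUnit_iff_ne_zero.mpr hS₁.det_pos.ne'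
  have hinvinv : S₁⁻¹⁻¹ = S₁ := Matrix.nonsing_inv_nonsing_inv _ hdet
  have hdetinv : IsUnit S₁⁻¹.det := isUnit_iff_ne_zero.mpr hS₁.inv.det_pos.ne'
  have hS2inv : S₂⁻¹ = (σ ^ 2)⁻¹ • S₁⁻¹ := by
    haveI : Invertible (σ ^ 2) := invertibleOfNonzero hσ2.ne'
    rw [hS₂, Matrix.inv_smul _ _ hdet, invOf_eq_inv]
  have key : ∀ α : ℝ, 0 ≤ α → α ≤ 1 →
      ((pfun D μ₁ μ₂ S₁ S₂ α ^ 2 * (1 - α * (1 - α) * pfun D μ₁ μ₂ S₁ S₂ α) = 0) ↔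
        ((σ ^ 2 * (1 - α) + α) ^ 3 - α * (1 - α) * m * σ ^ 2 = 0)) := by
    intro α h0 h1
    have hcpos0 : 0 < (1 - α) + α * (σ ^ 2)⁻¹ := by
      rcases lt_or_eq_of_le h1 with h | h
      · have h2 : 0 ≤ α * (σ ^ 2)⁻¹ := by positivity
        linarith
      · rw [← h]
        simp
        positivity
    have H : ∀ c : ℝ, 0 < c → (1 - α) + α * (σ ^ 2)⁻¹ = c →
        ((pfun D μ₁ μ₂ S₁ S₂ α ^ 2 * (1 - α * (1 - α) * pfun D μ₁ μ₂ S₁ S₂ α) = 0) ↔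
          ((σ ^ 2 * (1 - α) + α) ^ 3 - α * (1 - α) * m * σ ^ 2 = 0)) := by
      intro c hcpos hceq
      have hcomb : (1 - α) • S₁⁻¹ + α • S₂⁻¹ = c • S₁⁻¹ := by
        rw [hS2inv, smul_smul, ← add_smul, hceq]
      have hcombinv : ((1 - α) • S₁⁻¹ + α • S₂⁻¹)⁻¹ = c⁻¹ • S₁ := by
        haveI : Invertible c := invertibleOfNonzero hcpos.ne'
        rw [hcomb, Matrix.inv_smul _ _ hdetinv, invOf_eq_inv, hinvinv]
      have hp : pfun D μ₁ μ₂ S₁ S₂ α = (σ ^ 2)⁻¹ ^ 2 * c⁻¹ ^ 3 * m := by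
        rw [pfun, hcombinv, hS2inv, ← hvdef, hm]
        simp only [Matrix.smul_mul, Matrix.mul_smul, smul_smul,
          Matrix.mul_nonsing_inv_cancel_right _ _ hdet,
          Matrix.nonsing_inv_mul_cancel_right _ _ hdet,
          Matrix.smul_mulVec, dotProduct_smul, smul_eq_mul]
        ring
      have hd : σ ^ 2 * (1 - α) + α = σ ^ 2 * c := by
        rw [← hceq]
        field_simp
      have hkey : (σ ^ 2 * (1 - α) + α) ^ 3 - α * (1 - α) * m * σ ^ 2
          = (σ ^ 2 * c) ^ 3 * (1 - α * (1 - α) * pfun D μ₁ μ₂ S₁ S₂ α) := by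
        rw [hp, hd]
        field_simp
      have hppos : 0 < pfun D μ₁ μ₂ S₁ S₂ α := by
        rw [hp]; positivity
      have hd3 : (σ ^ 2 * c) ^ 3 ≠ 0 := by positivity
      constructor
      · intro heq
        rw [hkey]
        rcases mul_eq_zero.mp heq with h | h
        · exact absurd h (by positivity)
        · rw [h, mul_zero]
      · intro heq
        rw [hkey] at heq
        rcases mul_eq_zero.mp heq with h | h
        · exact absurd h hd3
        · rw [h, mul_zero]
    exact H _ hcpos0 rfl
  ext α
  simp only [Set.mem_setOf_eq, Set.mem_Icc]
  constructor <;> rintro ⟨⟨h0, h1⟩, heq⟩ <;> refine ⟨⟨h0, h1⟩, ?_⟩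
  · exact (key α h0 h1).mp heq
  · exact (key α h0 h1).mpr heq
end
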